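/- Let G be a directed graph with terminal pairs and let S, S' be two vertex sets with S' = (S \ S_v) ∪ S'_v where S_v ⊆ S is a minimal (v, T)-separator and S'_v is a (v, T)-separator with R⁺_{G−S_v}(v) ⊊ R⁺_{G−S'_v}(v). Then every vertex x ∈ S \ S' lies in the reverse shadow of S': no terminal in T is reachable from x in G − S'. -/

import Mathlib

/-- `b` is reachable from `a` in the directed graph `G` with the vertex set `S`
deleted. -/
def Reach {V : Type*} (G : V → V → Prop) (S : Set V) (a b : V) : Prop :=
  Relation.ReflTransGen (fun u v => u ∉ S ∧ v ∉ S ∧ G u v) a b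

/-- `X` is a `(v, T)`-separator in `G`: it avoids `T ∪ {v}` and after deleting it no
vertex of `T` is reachable from `v`. -/
def IsSep {V : Type*} (G : V → V → Prop) (v : V) (T : Set V) (X : Set V) : Prop :=
  X ⊆ (T ∪ {v})ᶜ ∧ ∀ u ∈ T, ¬ Reach G X v u

lemma reach_last {V : Type*} {G : V → V → Prop} {X : Set V} {a b : V}
    (h : Reach G X a b) (ha : a ∉ X) : b ∉ X := by
  induction h with
  | refl => exact ha
  | tail _ h _ => exact h.2.1

lemma reach_split {V : Type*} {G : V → V → Prop} {X : Set V} {x a b : V}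
    (h : Reach G (X \ {x}) a b) :
    Reach G X a b ∨ a = x ∨ ∃ c, Reach G X a c ∧ c ∉ X ∧ G c x := by
  induction h with
  | refl => exact Or.inl Relation.ReflTransGen.refl
  | @tail b c hab hedge ih =>
    obtain ⟨hb, hc, hG⟩ := hedge
    rcases ih with h1 | h2
    · by_cases hbX : b ∈ X
      · have hbx : b = x := by
          by_contra hne
          exact hb ⟨hbX, hne⟩
        -- Reach G X a b with b ∈ X forces a = b (else last vertex ∉ X)
        rcases (Relation.ReflTransGen.cases_head h1) with rfl | ⟨d, hd, _⟩
        · exact Or.inr (Or.inl hbx)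
        · exact absurd (reach_last h1 hd.1) (fun H => H hbX)
      · by_cases hcX : c ∈ X
        · have hcx : c = x := by
            by_contra hne
            exact hc ⟨hcX, hne⟩
          exact Or.inr (Or.inr ⟨b, h1, hbX, hcx ▸ hG⟩)
        · exact Or.inl (h1.tail ⟨hbX, hcX, hG⟩)
    · exact Or.inr h2

/-- Let `S_v ⊆ S` be a minimal `(v,T)`-separator and `S'_v` a `(v,T)`-separator with
`|S'_v| ≤ |S_v|` whose reachability set `R⁺_{G−S'_v}(v)` strictly contains
`R⁺_{G−S_v}(v)`, and let `S' = (S \ S_v) ∪ S'_v`. Then every `x ∈ S \ S'` lies in the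
reverse shadow of `S'`: no terminal of `T` is reachable from `x` in `G − S'`. -/
theorem stmt10 {V : Type*} [Fintype V] (G : V → V → Prop) (T : Set V)
    (v : V) (hvT : v ∉ T)
    (Sv S'v S : Set V)
    (hSvS : Sv ⊆ S)
    (hSvSep : IsSep G v T Sv)
    (hSvMin : ∀ Y : Set V, Y ⊂ Sv → ¬ IsSep G v T Y)
    (hS'vSep : IsSep G v T S'v)
    (hcard : S'v.ncard ≤ Sv.ncard)
    (hreach : {w | Reach G Sv v w} ⊂ {w | Reach G S'v v w})
    (S' : Set V) (hS' : S' = (S \ Sv) ∪ S'v) :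
    ∀ x ∈ S \ S', ∀ u ∈ T, ¬ Reach G S' x u := by
  intro x hx u hu hxu
  obtain ⟨hxS, hxS'⟩ := hx
  have hxSv : x ∈ Sv := by
    by_contra h
    exact hxS' (hS' ▸ Or.inl ⟨hxS, h⟩)
  have hxS'v : x ∉ S'v := fun h => hxS' (hS' ▸ Or.inr h)
  have hvSv : v ∉ Sv := fun h => hSvSep.1 h (Or.inr rfl)
  have hvS'v : v ∉ S'v := fun h => hS'vSep.1 h (Or.inr rfl)
  have hvx : v ≠ x := fun h => hvSv (h ▸ hxSv)
  -- Sv \ {x} is not a separator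
  have hssub : Sv \ {x} ⊂ Sv := by
    constructor
    · exact Set.diff_subset
    · intro h
      exact (h hxSv).2 rfl
  have hnotsep := hSvMin (Sv \ {x}) hssub
  have h1 : (Sv \ {x}) ⊆ (T ∪ {v})ᶜ := Set.diff_subset.trans hSvSep.1
  have : ∃ u0 ∈ T, Reach G (Sv \ {x}) v u0 := by
    by_contra h
    push_neg at h
    exact hnotsep ⟨h1, h⟩
  obtain ⟨u0, hu0T, hu0⟩ := this
  rcases reach_split hu0 with hr | hvx' | ⟨c, hvc, hcSv, hGcx⟩
  · exact hSvSep.2 u0 hu0T hr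
  · exact hvx hvx'
  · -- v reaches c in G − Sv, hence in G − S'v
    have hvc' : Reach G S'v v c := hreach.1 hvc
    have hcS'v : c ∉ S'v := reach_last hvc' hvS'v
    have hvx'' : Reach G S'v v x := hvc'.tail ⟨hcS'v, hxS'v, hGcx⟩
    -- x reaches u in G − S', hence in G − S'v
    have hS'vsub : S'v ⊆ S' := hS' ▸ Set.subset_union_right
    have hxu' : Reach G S'v x u :=
      Relation.ReflTransGen.mono
        (fun a b h => ⟨fun ha => h.1 (hS'vsub ha), fun hb => h.2.1 (hS'vsub hb), h.2.2⟩) x u hxu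
    exact hS'vSep.2 u hu (hvx''.trans hxu')
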